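/- Let (X_i)_{i≥1} be a (χ,ρ)-attachment sequence. If (x_1,…,x_N) and (x'_1,…,x'_N) are both acceptable sequences and one is a permutation (rearrangement) of the other, then ℙ((X_1,…,X_N) = (x_1,…,x_N)) = ℙ((X_1,…,X_N) = (x'_1,…,x'_N)). -/

import Mathlib

open MeasureTheory Finset

/-- A finite sequence `(x 0, …, x (n-1))` of positive integers is *acceptable* if
`x 0 = 1` and each subsequent entry exceeds the current maximum by at most one
(equivalently, the first occurrence of `k+1` comes strictly after the first
occurrence of `k`). -/
def Acceptable (n : ℕ) (x : ℕ → ℕ) : Prop :=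
  (∀ i < n, 1 ≤ x i) ∧ (0 < n → x 0 = 1) ∧
    ∀ i, i + 1 < n → x (i + 1) ≤ 1 + (Finset.range (i + 1)).sup x

/-- `cnt n x k` is the number of indices `i < n` with `x i = k`. -/
def cnt (n : ℕ) (x : ℕ → ℕ) (k : ℕ) : ℕ :=
  ((Finset.range n).filter fun i => x i = k).card

/-- `dmax n x` is the largest label among `x 0, …, x (n-1)`. -/
def dmax (n : ℕ) (x : ℕ → ℕ) : ℕ :=
  (Finset.range n).sup x

/-- A `(χ,ρ)`-attachment sequence: a sequence of positive-integer valued random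
variables encoding the linear preferential attachment tree with weights
`w_k = χ k + ρ`. -/
def IsAttachmentSeq {Ω : Type*} [MeasurableSpace Ω] (μ : Measure Ω) (χ ρ : ℝ)
    (X : ℕ → Ω → ℕ) : Prop :=
  (∀ i, Measurable (X i)) ∧
  μ {ω | X 0 ω = 1} = 1 ∧
  ∀ n : ℕ, 1 ≤ n → ∀ x : ℕ → ℕ, Acceptable n x → ∀ k : ℕ, 1 ≤ k →
    μ {ω | X n ω = k ∧ ∀ i < n, X i ω = x i} =
      (if k ≤ dmax n x then
        ENNReal.ofReal (((cnt n x k : ℝ) - χ) / ((n : ℝ) + ρ))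
      else if k = dmax n x + 1 then
        ENNReal.ofReal (((dmax n x : ℝ) * χ + ρ) / ((n : ℝ) + ρ))
      else 0) * μ {ω | ∀ i < n, X i ω = x i}

open scoped ENNReal

lemma acceptable_mono {n : ℕ} {x : ℕ → ℕ} (h : Acceptable (n+1) x) : Acceptable n x :=
  ⟨fun i hi => h.1 i (hi.trans (Nat.lt_succ_self n)),
   fun hn => h.2.1 (hn.trans (Nat.lt_succ_self n)),
   fun i hi => h.2.2 i (hi.trans (Nat.lt_succ_self n))⟩

lemma dmax_succ (n : ℕ) (x : ℕ → ℕ) : dmax (n+1) x = max (x n) (dmax n x) := by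
  simp [dmax, Finset.range_add_one]

lemma cnt_succ (n : ℕ) (x : ℕ → ℕ) (k : ℕ) :
    cnt (n+1) x k = cnt n x k + if x n = k then 1 else 0 := by
  rw [cnt, Finset.range_add_one, Finset.filter_insert]
  split_ifs with h
  · rw [Finset.card_insert_of_notMem (by simp), cnt]
  · simp [cnt]

lemma le_dmax_of_lt {n i : ℕ} {x : ℕ → ℕ} (hi : i < n) : x i ≤ dmax n x :=
  Finset.le_sup (Finset.mem_range.mpr hi)

lemma new_le {n : ℕ} {x : ℕ → ℕ} (hx : Acceptable (n+1) x) (hn : 1 ≤ n) :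
    x n ≤ dmax n x + 1 := by
  have := hx.2.2 (n-1) (by omega)
  have hn' : n - 1 + 1 = n := by omega
  rw [hn'] at this
  rw [dmax]; omega

lemma exists_of_le_dmax {n : ℕ} {x : ℕ → ℕ} (hx : Acceptable n x) :
    ∀ k, 1 ≤ k → k ≤ dmax n x → ∃ i < n, x i = k := by
  induction n with
  | zero => intro k hk1 hk; simp [dmax] at hk; omega
  | succ n ih =>
    intro k hk1 hk
    rw [dmax_succ] at hk
    rcases le_or_gt k (dmax n x) with h | h
    · obtain ⟨i, hi, hxi⟩ := ih (acceptable_mono hx) k hk1 h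
      exact ⟨i, hi.trans (Nat.lt_succ_self n), hxi⟩
    · have hk' : k ≤ x n := by omega
      rcases Nat.eq_zero_or_pos n with rfl | hn
      · have h0 : x 0 = 1 := hx.2.1 (by omega)
        exact ⟨0, by omega, by omega⟩
      · have := new_le hx hn
        exact ⟨n, Nat.lt_succ_self n, by omega⟩

lemma cnt_pos {n k : ℕ} {x : ℕ → ℕ} (hx : Acceptable n x) (hk1 : 1 ≤ k)
    (hk : k ≤ dmax n x) : 1 ≤ cnt n x k := by
  obtain ⟨i, hi, hxi⟩ := exists_of_le_dmax hx k hk1 hk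
  exact Finset.card_pos.mpr ⟨i, Finset.mem_filter.mpr ⟨Finset.mem_range.mpr hi, hxi⟩⟩

lemma cnt_dmax_succ_eq_zero {n : ℕ} {x : ℕ → ℕ} : cnt n x (dmax n x + 1) = 0 := by
  rw [cnt, Finset.card_eq_zero, Finset.filter_eq_empty_iff]
  intro i hi
  have := le_dmax_of_lt (Finset.mem_range.mp hi) (x := x)
  omega

section formula

noncomputable def Fnum (χ ρ : ℝ) (n : ℕ) (x : ℕ → ℕ) : ℝ≥0∞ :=
  (∏ k ∈ Finset.Icc 1 (dmax n x), ∏ j ∈ Finset.Ico 1 (cnt n x k),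
      ENNReal.ofReal ((j:ℝ) - χ)) *
  ∏ k ∈ Finset.Ico 1 (dmax n x), ENNReal.ofReal ((k:ℝ) * χ + ρ)

noncomputable def Fden (ρ : ℝ) (n : ℕ) : ℝ≥0∞ :=
  ∏ m ∈ Finset.Ico 1 n, ENNReal.ofReal ((m:ℝ) + ρ)

lemma Fden_ne_zero {ρ : ℝ} (hρ : 0 < ρ) (n : ℕ) : Fden ρ n ≠ 0 := by
  rw [Fden, Finset.prod_ne_zero_iff]
  intro m hm
  have : (0:ℝ) < (m:ℝ) + ρ := by positivity
  exact (ENNReal.ofReal_pos.mpr this).ne'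

lemma Fden_ne_top {ρ : ℝ} (n : ℕ) : Fden ρ n ≠ ⊤ :=
  ENNReal.prod_ne_top (fun m _ => ENNReal.ofReal_ne_top)

end formula

example : True := trivial

lemma key {Ω : Type*} [MeasurableSpace Ω] (μ : Measure Ω)
    (χ ρ : ℝ) (hχ : χ < 1) (hρ : ρ = 1 - χ) (X : ℕ → Ω → ℕ)
    (hX : IsAttachmentSeq μ χ ρ X) :
    ∀ n, 1 ≤ n → ∀ x, Acceptable n x →
      μ {ω | ∀ i < n, X i ω = x i} = Fnum χ ρ n x * (Fden ρ n)⁻¹ := by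
  have hρ0 : 0 < ρ := by rw [hρ]; linarith
  intro n hn
  induction n, hn using Nat.le_induction with
  | base =>
    intro x hx
    have h0 : x 0 = 1 := hx.2.1 one_pos
    have hset : {ω | ∀ i < 1, X i ω = x i} = {ω | X 0 ω = 1} := by
      ext ω
      simp only [Set.mem_setOf_eq, Nat.lt_one_iff, forall_eq, h0]
    have hd : dmax 1 x = 1 := by simp [dmax, h0]
    have hc : cnt 1 x 1 = 1 := by
      rw [cnt]; simp [Finset.range_one, Finset.filter_singleton, h0]
    rw [hset, hX.2.1, Fnum, hd]
    simp [Fden, hc]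
  | succ n hn ih =>
    intro x hx
    have hxn := acceptable_mono hx
    have hk1 : 1 ≤ x n := hx.1 n (Nat.lt_succ_self n)
    have hset : {ω | ∀ i < n + 1, X i ω = x i} =
        {ω | X n ω = x n ∧ ∀ i < n, X i ω = x i} := by
      ext ω
      simp only [Set.mem_setOf_eq]
      constructor
      · intro h
        exact ⟨h n (Nat.lt_succ_self n), fun i hi => h i (hi.trans (Nat.lt_succ_self n))⟩
      · rintro ⟨h1, h2⟩ i hi
        rcases Nat.lt_succ_iff_lt_or_eq.mp hi with hi' | rfl
        · exact h2 i hi'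
        · exact h1
    have hnρ : (0:ℝ) < (n:ℝ) + ρ := by
      have : (1:ℝ) ≤ (n:ℝ) := by exact_mod_cast hn
      linarith
    have hFden : Fden ρ (n+1) = Fden ρ n * ENNReal.ofReal ((n:ℝ) + ρ) :=
      Finset.prod_Ico_succ_top hn _
    rw [hset, hX.2.2 n hn x hxn (x n) hk1, ih x hxn]
    by_cases hcase : x n ≤ dmax n x
    · -- old label
      have hd1 : dmax (n+1) x = dmax n x := by rw [dmax_succ]; omega
      have hcpos : 1 ≤ cnt n x (x n) := cnt_pos hxn hk1 hcase
      have hk_mem : x n ∈ Finset.Icc 1 (dmax n x) := Finset.mem_Icc.mpr ⟨hk1, hcase⟩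
      have hFnum : Fnum χ ρ (n+1) x =
          ENNReal.ofReal ((cnt n x (x n) : ℝ) - χ) * Fnum χ ρ n x := by
        rw [Fnum, Fnum, hd1, ← Finset.mul_prod_erase _ _ hk_mem,
          ← Finset.mul_prod_erase _ (fun k => ∏ j ∈ Finset.Ico 1 (cnt n x k),
            ENNReal.ofReal ((j:ℝ) - χ)) hk_mem]
        have hrest : ∏ k ∈ (Finset.Icc 1 (dmax n x)).erase (x n),
            (∏ j ∈ Finset.Ico 1 (cnt (n+1) x k), ENNReal.ofReal ((j:ℝ) - χ)) =
            ∏ k ∈ (Finset.Icc 1 (dmax n x)).erase (x n),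
            (∏ j ∈ Finset.Ico 1 (cnt n x k), ENNReal.ofReal ((j:ℝ) - χ)) := by
          refine Finset.prod_congr rfl fun k hk => ?_
          have hne : x n ≠ k := fun h => (Finset.mem_erase.mp hk).1 h.symm
          rw [cnt_succ, if_neg hne, add_zero]
        have hcn : cnt (n+1) x (x n) = cnt n x (x n) + 1 := by
          rw [cnt_succ, if_pos rfl]
        rw [hrest, hcn, Finset.prod_Ico_succ_top hcpos]
        push_cast
        ring
      rw [if_pos hcase, hFnum, hFden, ENNReal.ofReal_div_of_pos hnρ,
        ENNReal.mul_inv (Or.inl (Fden_ne_zero hρ0 n)) (Or.inl (Fden_ne_top n)),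
        div_eq_mul_inv]
      ring
    · -- new label
      have hle := new_le hx hn
      have hkd : x n = dmax n x + 1 := by omega
      have hd1 : dmax (n+1) x = dmax n x + 1 := by rw [dmax_succ]; omega
      have hdpos : 1 ≤ dmax n x := by
        have h0 : x 0 = 1 := hxn.2.1 hn
        have := le_dmax_of_lt (x := x) (Nat.lt_of_lt_of_le Nat.zero_lt_one hn)
        omega
      have hFnum : Fnum χ ρ (n+1) x =
          ENNReal.ofReal ((dmax n x : ℝ) * χ + ρ) * Fnum χ ρ n x := by
        rw [Fnum, Fnum, hd1, Finset.prod_Icc_succ_top (Nat.le_succ_of_le hdpos),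
          Finset.prod_Ico_succ_top hdpos]
        have hcn : cnt (n+1) x (dmax n x + 1) = 1 := by
          rw [cnt_succ, if_pos hkd, cnt_dmax_succ_eq_zero]
        have hrest : ∏ k ∈ Finset.Icc 1 (dmax n x),
            (∏ j ∈ Finset.Ico 1 (cnt (n+1) x k), ENNReal.ofReal ((j:ℝ) - χ)) =
            ∏ k ∈ Finset.Icc 1 (dmax n x),
            (∏ j ∈ Finset.Ico 1 (cnt n x k), ENNReal.ofReal ((j:ℝ) - χ)) := by
          refine Finset.prod_congr rfl fun k hk => ?_
          have hkle := (Finset.mem_Icc.mp hk).2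
          have hne : x n ≠ k := by omega
          rw [cnt_succ, if_neg hne, add_zero]
        rw [hcn, hrest]
        simp
        ring
      rw [if_neg hcase, if_pos hkd, hFnum, hFden, ENNReal.ofReal_div_of_pos hnρ,
        ENNReal.mul_inv (Or.inl (Fden_ne_zero hρ0 n)) (Or.inl (Fden_ne_top n)),
        div_eq_mul_inv]
      ring

lemma ofFn_list (n : ℕ) (x : ℕ → ℕ) :
    (List.ofFn fun i : Fin n => x i) = (List.range n).map x := by
  rw [List.ofFn_eq_map, ← List.map_coe_finRange_eq_range, List.map_map]
  rfl

lemma cnt_eq_count (n : ℕ) (x : ℕ → ℕ) (k : ℕ) :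
    cnt n x k = Multiset.count k (Multiset.map x (Finset.range n).val) := by
  rw [Multiset.count_map, cnt, Finset.card, Finset.filter_val]
  congr 1
  exact Multiset.filter_congr (fun a _ => eq_comm)

lemma dmax_eq_sup (n : ℕ) (x : ℕ → ℕ) :
    dmax n x = (Multiset.map x (Finset.range n).val).sup := by
  rw [dmax, Finset.sup_def]

/-- For a `(χ,ρ)`-attachment sequence (with `χ < 1`, `ρ = 1 - χ`,
and `1/|χ|` a positive integer if `χ < 0`), any two acceptable sequences of length
`N` that are rearrangements (permutations) of one another have the same
probability. -/
theorem stmt2_attachment_exchangeable {Ω : Type*} [MeasurableSpace Ω]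
    (μ : Measure Ω) [IsProbabilityMeasure μ] (χ ρ : ℝ)
    (hχ : χ < 1) (hρ : ρ = 1 - χ)
    (hint : χ < 0 → ∃ m : ℕ, 0 < m ∧ (m : ℝ) * |χ| = 1)
    (X : ℕ → Ω → ℕ) (hX : IsAttachmentSeq μ χ ρ X)
    (N : ℕ) (hN : 1 ≤ N) (x x' : ℕ → ℕ)
    (hx : Acceptable N x) (hx' : Acceptable N x')
    (hperm : (List.ofFn fun i : Fin N => x i).Perm (List.ofFn fun i : Fin N => x' i)) :
    μ {ω | ∀ i < N, X i ω = x i} = μ {ω | ∀ i < N, X i ω = x' i} := by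
  have hM : Multiset.map x (Finset.range N).val = Multiset.map x' (Finset.range N).val := by
    have h := Multiset.coe_eq_coe.mpr hperm
    rw [ofFn_list, ofFn_list] at h
    rw [Finset.range_val]
    show Multiset.map x ↑(List.range N) = Multiset.map x' ↑(List.range N)
    rw [Multiset.map_coe, Multiset.map_coe]
    exact h
  have hcnt : ∀ k, cnt N x k = cnt N x' k := fun k => by
    rw [cnt_eq_count, cnt_eq_count, hM]
  have hdmax : dmax N x = dmax N x' := by
    rw [dmax_eq_sup, dmax_eq_sup, hM]
  rw [key μ χ ρ hχ hρ X hX N hN x hx, key μ χ ρ hχ hρ X hX N hN x' hx']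
  congr 1
  rw [Fnum, Fnum, hdmax]
  congr 1
  exact Finset.prod_congr rfl fun k _ => by rw [hcnt k]
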